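/- Let g be a good counter on a graph G, let X, Y ⊆ V(G) be disjoint, and let v ∈ V(G) ∖ (X ∪ Y). Then |g(X,Y) − g(X∪{v}, Y)| ≤ 1 and |g(X,Y) − g(X, Y∪{v})| ≤ 1. -/
import Mathlib


open Finset
open scoped Classical

variable {V : Type*} [Fintype V]

/-- `fG G X Y` is the sum of `(-1)^|A|` over stable sets `A` of `G`
with `X ⊆ A` and `A ∩ Y = ∅`. -/
noncomputable def fG (G : SimpleGraph V) (X Y : Finset V) : ℤ :=
  ∑ A ∈ Finset.univ.filter (fun A : Finset V =>
      (∀ u ∈ A, ∀ v ∈ A, ¬ G.Adj u v) ∧ X ⊆ A ∧ Disjoint A Y),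
    (-1 : ℤ) ^ A.card

/-- `g` is a counter on `G` if `g = fG G` or `g = - fG G`. -/
def IsCounter (G : SimpleGraph V) (g : Finset V → Finset V → ℤ) : Prop :=
  (g = fun X Y => fG G X Y) ∨ (g = fun X Y => - fG G X Y)

/-- A counter is good if it satisfies the two boundedness conditions. -/
def IsGood (g : Finset V → Finset V → ℤ) : Prop :=
  ∀ X Y : Finset V, Disjoint X Y → (X ∪ Y).Nonempty →
    |g X Y| ≤ 1 ∧
    ∀ u v : V, u ∉ X ∪ Y → v ∉ X ∪ Y →
      |g (insert u X) Y - g (insert v X) Y| ≤ 1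

lemma fG_split (G : SimpleGraph V) (X Y : Finset V) (v : V)
    (hvX : v ∉ X) (hvY : v ∉ Y) :
    fG G X Y = fG G (insert v X) Y + fG G X (insert v Y) := by
  unfold fG
  rw [← Finset.sum_filter_add_sum_filter_not
    (Finset.univ.filter (fun A : Finset V =>
      (∀ u ∈ A, ∀ v ∈ A, ¬ G.Adj u v) ∧ X ⊆ A ∧ Disjoint A Y))
    (fun A => v ∈ A)]
  congr 1
  · apply Finset.sum_congr _ (fun _ _ => rfl)
    ext A
    simp only [Finset.mem_filter, Finset.mem_univ, true_and, Finset.insert_subset_iff]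
    tauto
  · apply Finset.sum_congr _ (fun _ _ => rfl)
    ext A
    simp only [Finset.mem_filter, Finset.mem_univ, true_and,
      Finset.disjoint_insert_right]
    tauto

lemma g_split (G : SimpleGraph V) (g : Finset V → Finset V → ℤ)
    (hc : IsCounter G g) (X Y : Finset V) (v : V) (hvX : v ∉ X) (hvY : v ∉ Y) :
    g X Y = g (insert v X) Y + g X (insert v Y) := by
  rcases hc with h | h <;> subst h <;> simp [fG_split G X Y v hvX hvY] <;> ring

theorem adjacent_bound (G : SimpleGraph V) (g : Finset V → Finset V → ℤ)
    (hc : IsCounter G g) (hg : IsGood g)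
    (X Y : Finset V) (hXY : Disjoint X Y) (v : V) (hv : v ∉ X ∪ Y) :
    |g X Y - g (insert v X) Y| ≤ 1 ∧ |g X Y - g X (insert v Y)| ≤ 1 := by
  have hvX : v ∉ X := fun h => hv (Finset.mem_union_left _ h)
  have hvY : v ∉ Y := fun h => hv (Finset.mem_union_right _ h)
  have hsplit := g_split G g hc X Y v hvX hvY
  have h1 : Disjoint (insert v X) Y := by
    simp [Finset.disjoint_insert_left, hvY, hXY]
  have h2 : Disjoint X (insert v Y) := by
    simp [Finset.disjoint_insert_right, hvX, hXY]
  have hne1 : ((insert v X) ∪ Y).Nonempty := ⟨v, by simp⟩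
  have hne2 : (X ∪ insert v Y).Nonempty := ⟨v, by simp⟩
  constructor
  · have := (hg X (insert v Y) h2 hne2).1
    calc |g X Y - g (insert v X) Y| = |g X (insert v Y)| := by rw [hsplit]; ring_nf
    _ ≤ 1 := this
  · have := (hg (insert v X) Y h1 hne1).1
    calc |g X Y - g X (insert v Y)| = |g (insert v X) Y| := by rw [hsplit]; ring_nf
    _ ≤ 1 := this
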